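/- arXiv:1306.4868 — 2 statements merged into one kernel-verified Lean document; each statement's English description precedes it below -/
import Mathlib

section
/- Let 1/2 < α < β < 1 and γ > 0. The infinite matrix A_{α,β,γ} = (a_{α,β,γ}(m,n))_{m,n≥1} is symmetric positive definite: a_{α,β,γ}(m,n) = a_{α,β,γ}(n,m) for all m, n ≥ 1, and for every finitely supported complex sequence (c_n)_{n≥1} that is not identically zero, Σ_{m≥1} Σ_{n≥1} conj(c_m) a_{α,β,γ}(m,n) c_n is a strictly positive real number. -/
open Complex

/-- The matrix entry `a_{α,β,γ}(m,n)`, with the conventions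
`((1/1)^α - (1/1)^β)/log 1 = β - α` and `sin(γ·0)/0 = γ`. -/
noncomputable def aMat (α β γ : ℝ) (m n : ℕ) : ℝ :=
  (if m * n = 1 then β - α
    else (((1 : ℝ) / (m * n)) ^ α - ((1 : ℝ) / (m * n)) ^ β) / Real.log (m * n)) *
  (if m = n then γ else Real.sin (γ * Real.log ((m : ℝ) / n)) / Real.log ((m : ℝ) / n))

open Filter Topology Set intervalIntegral

noncomputable def Lg (n : ℕ) : ℝ := Real.log ((n : ℝ) + 1)

noncomputable def Gc (c : ℕ →₀ ℂ) (z : ℂ) : ℂ :=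
  ∑ n ∈ c.support, c n * Complex.exp (-z * (Lg n : ℂ))

noncomputable def Fc (c : ℕ →₀ ℂ) (s t : ℝ) : ℂ := Gc c ((s : ℂ) + (t : ℂ) * I)

noncomputable def hK (c : ℕ →₀ ℂ) (s t : ℝ) : ℝ :=
  (Complex.normSq (Fc c s t) + Complex.normSq (Fc c s (-t))) / 2

/-- linear independence of real exponentials with complex coefficients -/
lemma expIndep (s : Finset ℕ) (w : ℕ → ℝ) (hw : Set.InjOn w s) (b : ℕ → ℂ)
    (h : ∀ x : ℝ, ∑ n ∈ s, b n * Real.exp (x * w n) = 0) : ∀ n ∈ s, b n = 0 := by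
  classical
  induction s using Finset.strongInduction with
  | _ s ih =>
    rcases s.eq_empty_or_nonempty with rfl | hne
    · simp
    obtain ⟨n₀, hn₀s, hmax⟩ := s.exists_max_image w hne
    have key : b n₀ = 0 := by
      have hT : ∀ x : ℝ, ∑ n ∈ s, b n * Real.exp (x * (w n - w n₀)) = 0 := by
        intro x
        have := h x
        have : (∑ n ∈ s, b n * Real.exp (x * w n)) * Real.exp (-(x * w n₀)) = 0 := by
          rw [this]; ring
        rw [Finset.sum_mul] at this
        convert this using 2 with n hn
        rw [mul_assoc]
        congr 1
        push_cast
        rw [mul_sub, sub_eq_add_neg, Complex.exp_add]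
      have hlim : Tendsto (fun x : ℝ => ∑ n ∈ s, b n * Real.exp (x * (w n - w n₀)))
          atTop (𝓝 (b n₀)) := by
        have : Tendsto (fun x : ℝ => ∑ n ∈ s, b n * Real.exp (x * (w n - w n₀)))
            atTop (𝓝 (∑ n ∈ s, if n = n₀ then b n₀ else 0)) := by
          apply tendsto_finset_sum
          intro n hn
          by_cases hnn : n = n₀
          · subst hnn
            simp only [sub_self, mul_zero, Real.exp_zero, ofReal_one, mul_one, if_pos]
            exact tendsto_const_nhds
          · simp only [if_neg hnn]
            have hd : w n - w n₀ < 0 := by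
              have hle : w n ≤ w n₀ := hmax n hn
              have hne' : w n ≠ w n₀ := fun he => hnn (hw hn hn₀s he)
              have : w n < w n₀ := lt_of_le_of_ne hle hne'
              linarith
            have h1 : Tendsto (fun x : ℝ => x * (w n - w n₀)) atTop atBot :=
              tendsto_id.atTop_mul_const_of_neg hd
            have h2 : Tendsto (fun x : ℝ => Real.exp (x * (w n - w n₀))) atTop (𝓝 0) :=
              Real.tendsto_exp_atBot.comp h1
            have h3 : Tendsto (fun x : ℝ => ((Real.exp (x * (w n - w n₀)) : ℝ) : ℂ))
                atTop (𝓝 0) := by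
              rw [show ((0 : ℂ)) = ((0 : ℝ) : ℂ) by norm_num]
              exact (Complex.continuous_ofReal.tendsto 0).comp h2
            simpa using h3.const_mul (b n)
        simpa [Finset.sum_ite_eq' s n₀ (fun _ => b n₀), hn₀s] using this
      have : Tendsto (fun _ : ℝ => (0 : ℂ)) atTop (𝓝 (b n₀)) := by
        convert hlim using 1; ext x; exact (hT x).symm
      exact tendsto_nhds_unique this tendsto_const_nhds
    intro n hn
    by_cases hnn : n = n₀
    · subst hnn; exact key
    · have herase : ∀ x : ℝ, ∑ m ∈ s.erase n₀, b m * Real.exp (x * w m) = 0 := by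
        intro x
        have := h x
        rwa [← Finset.add_sum_erase s _ hn₀s, key, zero_mul, zero_add] at this
      exact ih (s.erase n₀) (Finset.erase_ssubset hn₀s)
        (hw.mono (by intro z hz; exact Finset.mem_of_mem_erase hz)) herase n
        (Finset.mem_erase.mpr ⟨hnn, hn⟩)

/-- A continuous nonnegative function positive at an interior point has positive integral. -/
lemma pos_integral {f : ℝ → ℝ} (hf : Continuous f) (h0 : ∀ x, 0 ≤ f x) {a b x₀ : ℝ}
    (hx : x₀ ∈ Set.Ioo a b) (hp : 0 < f x₀) : 0 < ∫ x in a..b, f x := by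
  have hab : a < b := lt_trans hx.1 hx.2
  -- find δ such that f > 0 on ball
  have hopen : IsOpen (f ⁻¹' Set.Ioi 0) := isOpen_Ioi.preimage hf
  obtain ⟨δ, hδ, hball⟩ := Metric.isOpen_iff.1 hopen x₀ hp
  set c := max a (x₀ - δ/2)
  set d := min b (x₀ + δ/2)
  have hcd : c < d := by
    have h1 := hx.1; have h2 := hx.2
    apply max_lt <;> apply lt_min <;> linarith
  have hposcd : ∀ x ∈ Set.Ioo c d, 0 < f x := by
    intro x hx'
    apply hball
    rw [Metric.mem_ball, Real.dist_eq, abs_lt]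
    have h1 : x₀ - δ/2 ≤ c := le_max_right _ _
    have h2 : d ≤ x₀ + δ/2 := min_le_right _ _
    constructor <;> [nlinarith [hx'.1, hx'.2]; nlinarith [hx'.1, hx'.2]]
  have hac : a ≤ c := le_max_left _ _
  have hdb : d ≤ b := min_le_left _ _
  have hi : ∀ u v : ℝ, IntervalIntegrable f MeasureTheory.volume u v :=
    fun u v => hf.intervalIntegrable u v
  have key : 0 < ∫ x in c..d, f x :=
    intervalIntegral_pos_of_pos_on (hi c d) hposcd hcd
  have h1 : (0:ℝ) ≤ ∫ x in a..c, f x := intervalIntegral.integral_nonneg hac (fun x _ => h0 x)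
  have h2 : (0:ℝ) ≤ ∫ x in d..b, f x := intervalIntegral.integral_nonneg hdb (fun x _ => h0 x)
  have hsplit : ∫ x in a..b, f x = (∫ x in a..c, f x) + (∫ x in c..d, f x) + ∫ x in d..b, f x := by
    rw [integral_add_adjacent_intervals (hi a c) (hi c d),
      integral_add_adjacent_intervals (hi a d) (hi d b)]
  linarith

/-- ∫_α^β exp(-s L) ds -/
lemma int_exp_neg (α β L : ℝ) (hL : L ≠ 0) :
    ∫ s in α..β, Real.exp (-(s * L)) = (Real.exp (-(α*L)) - Real.exp (-(β*L))) / L := by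
  have hd : ∀ s ∈ Set.uIcc α β, HasDerivAt (fun u => -Real.exp (-(u*L)) / L)
      (Real.exp (-(s*L))) s := by
    intro s _
    have h1 : HasDerivAt (fun u : ℝ => -(u*L)) (-L) s := by
      simpa using ((hasDerivAt_id s).mul_const L).fun_neg
    have h2 : HasDerivAt (fun u : ℝ => Real.exp (-(u*L))) (Real.exp (-(s*L)) * (-L)) s :=
      (Real.hasDerivAt_exp _).comp s h1
    have h3 := (h2.neg).div_const L
    exact h3.congr_deriv (by rw [mul_neg, neg_neg, mul_div_cancel_right₀ _ hL])
  rw [integral_eq_sub_of_hasDerivAt hd]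
  · field_simp; ring
  · exact (Real.continuous_exp.comp (by continuity)).intervalIntegrable _ _

/-- ∫_0^γ cos(t x) dt = sin(γ x)/x for x ≠ 0 -/
lemma int_cos (γ x : ℝ) (hx : x ≠ 0) :
    ∫ t in (0:ℝ)..γ, Real.cos (t * x) = Real.sin (γ * x) / x := by
  have hd : ∀ t ∈ Set.uIcc (0:ℝ) γ, HasDerivAt (fun u => Real.sin (u*x) / x)
      (Real.cos (t*x)) t := by
    intro t _
    have h1 : HasDerivAt (fun u : ℝ => u*x) x t := by simpa using (hasDerivAt_id t).mul_const x
    have h2 : HasDerivAt (fun u : ℝ => Real.sin (u*x)) (Real.cos (t*x) * x) t :=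
      (Real.hasDerivAt_sin _).comp t h1
    have h3 := h2.div_const x
    exact h3.congr_deriv (by rw [mul_div_cancel_right₀ _ hx])
  rw [integral_eq_sub_of_hasDerivAt hd]
  · simp
  · exact (Real.continuous_cos.comp (by continuity)).intervalIntegrable _ _

lemma aMat_eq (α β γ : ℝ) (m n : ℕ) :
    aMat α β γ (m+1) (n+1) =
      (∫ s in α..β, Real.exp (-(s * (Lg m + Lg n)))) *
      (∫ t in (0:ℝ)..γ, Real.cos (t * (Lg m - Lg n))) := by
  have hm1 : (0:ℝ) < (m:ℝ) + 1 := by positivity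
  have hn1 : (0:ℝ) < (n:ℝ) + 1 := by positivity
  have hsum : Lg m + Lg n = Real.log (((m:ℝ)+1) * ((n:ℝ)+1)) := by
    rw [Real.log_mul (by positivity) (by positivity)]; rfl
  have hdiff : Lg m - Lg n = Real.log (((m:ℝ)+1) / ((n:ℝ)+1)) := by
    rw [Real.log_div (by positivity) (by positivity)]; rfl
  rw [aMat]
  congr 1
  · -- first factor
    by_cases h1 : (m+1) * (n+1) = 1
    · have hm0 := Nat.eq_one_of_mul_eq_one_right h1
      have hn0 := Nat.eq_one_of_mul_eq_one_left h1
      obtain rfl : m = 0 := by omega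
      obtain rfl : n = 0 := by omega
      norm_num [Lg, Real.log_one]
    · have hr : (1:ℝ) < ((m:ℝ)+1) * ((n:ℝ)+1) := by
        have h2 : 2 ≤ (m+1) * (n+1) := by
          rcases Nat.eq_zero_or_pos m with rfl | hm
          · rcases Nat.eq_zero_or_pos n with rfl | hn
            · simp at h1
            · simpa using Nat.mul_le_mul (le_refl 1) (by omega : 2 ≤ n+1)
          · simpa using Nat.mul_le_mul (by omega : 2 ≤ m+1) (by omega : 1 ≤ n+1)
        have : (2:ℝ) ≤ (((m+1) * (n+1) : ℕ) : ℝ) := by exact_mod_cast h2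
        push_cast at this; nlinarith
      have hL : Lg m + Lg n ≠ 0 := by rw [hsum]; exact ne_of_gt (Real.log_pos hr)
      rw [if_neg h1, int_exp_neg _ _ _ hL]
      push_cast
      have hrpow : ∀ x : ℝ, ((1 : ℝ) / (((m:ℝ)+1) * ((n:ℝ)+1))) ^ x
          = Real.exp (-(x * (Lg m + Lg n))) := by
        intro x
        rw [Real.rpow_def_of_pos (by positivity), one_div, Real.log_inv, hsum]
        ring_nf
      rw [hrpow α, hrpow β, hsum]
  · -- second factor
    by_cases h2 : m = n
    · subst h2; simp
    · have hne : (m+1 : ℕ) ≠ (n+1 : ℕ) := by omega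
      have hx : Lg m - Lg n ≠ 0 := by
        rw [hdiff]
        intro h
        have hq : ((m:ℝ)+1)/((n:ℝ)+1) = 1 := by
          rcases Real.log_eq_zero.mp h with h' | h' | h'
          · exact absurd h' (ne_of_gt (div_pos hm1 hn1))
          · exact h'
          · exfalso; nlinarith [div_pos hm1 hn1]
        field_simp at hq
        exact h2 (by exact_mod_cast (by linarith : (m:ℝ) = n))
      rw [if_neg hne, int_cos _ _ hx, hdiff]
      push_cast
      ring_nf

lemma cos_exp (w : ℂ) : Complex.cos w = (Complex.exp (w*I) + Complex.exp (-(w*I)))/2 := by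
  have h1 := Complex.exp_mul_I (x := w)
  have h2 := Complex.exp_mul_I (x := -w)
  rw [h1, show -(w*I) = -w*I by ring, h2, Complex.cos_neg, Complex.sin_neg]
  ring

/-- Pointwise kernel identity. -/
lemma pointwise_id (c : ℕ →₀ ℂ) (s t : ℝ) :
    ∑ m ∈ c.support, ∑ n ∈ c.support, (starRingEnd ℂ) (c m) * c n *
      ((Real.exp (-(s * (Lg m + Lg n))) * Real.cos (t * (Lg m - Lg n)) : ℝ) : ℂ)
    = ((hK c s t : ℝ) : ℂ) := by
  classical
  set S := c.support
  set u : ℕ → ℂ := fun m => (starRingEnd ℂ) (c m * Complex.exp (-((s:ℂ) + (t:ℂ)*I) * (Lg m : ℂ)))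
  set v : ℕ → ℂ := fun n => c n * Complex.exp (-((s:ℂ) + (t:ℂ)*I) * (Lg n : ℂ))
  set u' : ℕ → ℂ := fun m => (starRingEnd ℂ) (c m * Complex.exp (-((s:ℂ) + ((-t:ℝ):ℂ)*I) * (Lg m : ℂ)))
  set v' : ℕ → ℂ := fun n => c n * Complex.exp (-((s:ℂ) + ((-t:ℝ):ℂ)*I) * (Lg n : ℂ))
  have hterm : ∀ m n : ℕ, (starRingEnd ℂ) (c m) * c n *
      ((Real.exp (-(s * (Lg m + Lg n))) * Real.cos (t * (Lg m - Lg n)) : ℝ) : ℂ)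
      = (u m * v n + u' m * v' n) / 2 := by
    intro m n
    simp only [u, v, u', v', map_mul, ← Complex.exp_conj, map_neg, map_add, map_mul,
      Complex.conj_ofReal, Complex.conj_I]
    push_cast
    rw [cos_exp]
    have e1 : Complex.exp (-((s:ℂ) * ((Lg m : ℂ) + (Lg n : ℂ)))) *
        Complex.exp (((t:ℂ) * ((Lg m : ℂ) - (Lg n : ℂ))) * I)
        = Complex.exp (-((s:ℂ) + (t:ℂ) * -I) * (Lg m : ℂ)) *
          Complex.exp (-((s:ℂ) + (t:ℂ) * I) * (Lg n : ℂ)) := by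
      rw [← Complex.exp_add, ← Complex.exp_add]; congr 1; ring
    have e2 : Complex.exp (-((s:ℂ) * ((Lg m : ℂ) + (Lg n : ℂ)))) *
        Complex.exp (-(((t:ℂ) * ((Lg m : ℂ) - (Lg n : ℂ))) * I))
        = Complex.exp (-((s:ℂ) + (-(t:ℂ)) * -I) * (Lg m : ℂ)) *
          Complex.exp (-((s:ℂ) + (-(t:ℂ)) * I) * (Lg n : ℂ)) := by
      rw [← Complex.exp_add, ← Complex.exp_add]; congr 1; ring
    linear_combination ((starRingEnd ℂ) (c m) * c n / 2) * e1 +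
      ((starRingEnd ℂ) (c m) * c n / 2) * e2
  calc ∑ m ∈ S, ∑ n ∈ S, (starRingEnd ℂ) (c m) * c n *
        ((Real.exp (-(s * (Lg m + Lg n))) * Real.cos (t * (Lg m - Lg n)) : ℝ) : ℂ)
      = ∑ m ∈ S, ∑ n ∈ S, (u m * v n + u' m * v' n) / 2 := by
        exact Finset.sum_congr rfl fun m _ => Finset.sum_congr rfl fun n _ => hterm m n
    _ = ((∑ m ∈ S, u m) * (∑ n ∈ S, v n) + (∑ m ∈ S, u' m) * (∑ n ∈ S, v' n)) / 2 := by
        rw [Finset.sum_mul_sum, Finset.sum_mul_sum, ← Finset.sum_add_distrib]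
        rw [Finset.sum_div]
        refine Finset.sum_congr rfl fun m _ => ?_
        rw [← Finset.sum_add_distrib, Finset.sum_div]
    _ = ((hK c s t : ℝ) : ℂ) := by
        have hu : ∑ m ∈ S, u m = (starRingEnd ℂ) (Fc c s t) := by
          rw [Fc, Gc, map_sum]
        have hu' : ∑ m ∈ S, u' m = (starRingEnd ℂ) (Fc c s (-t)) := by
          rw [Fc, Gc, map_sum]
        have hv : ∑ n ∈ S, v n = Fc c s t := rfl
        have hv' : ∑ n ∈ S, v' n = Fc c s (-t) := rfl
        rw [hu, hu', hv, hv', hK]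
        push_cast
        rw [mul_comm ((starRingEnd ℂ) (Fc c s t)) (Fc c s t),
          mul_comm ((starRingEnd ℂ) (Fc c s (-t))) (Fc c s (-t)),
          Complex.mul_conj, Complex.mul_conj]

lemma exists_nonzero (c : ℕ →₀ ℂ) (hc : c ≠ 0) (s₀ γ : ℝ) (hγ : 0 < γ) :
    ∃ t₀ ∈ Set.Ioo (0:ℝ) γ, Fc c s₀ t₀ ≠ 0 := by
  classical
  by_contra hcon
  push_neg at hcon
  -- G is entire
  have hG : Differentiable ℂ (Gc c) := by
    apply Differentiable.fun_sum
    intro n _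
    apply Differentiable.const_mul
    apply Differentiable.cexp
    apply Differentiable.mul_const
    exact differentiable_neg
  have hGA : AnalyticOnNhd ℂ (Gc c) Set.univ :=
    hG.differentiableOn.analyticOnNhd isOpen_univ
  -- the accumulation point
  set z₀ : ℂ := (s₀ : ℂ) + ((γ/2 : ℝ) : ℂ) * I with hz₀
  set tk : ℕ → ℝ := fun k => γ/2 + γ/(4*(k+1)) with htk
  have htk_mem : ∀ k, tk k ∈ Set.Ioo (0:ℝ) γ := by
    intro k
    have h1 : (0:ℝ) < 4*((k:ℝ)+1) := by positivity
    have h2 : 0 < γ/(4*((k:ℝ)+1)) := by positivity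
    have h3 : γ/(4*((k:ℝ)+1)) ≤ γ/4 := by
      apply div_le_div_of_nonneg_left (le_of_lt hγ) (by norm_num)
      · push_cast; nlinarith [Nat.cast_nonneg (α := ℝ) k]
    constructor
    · simp only [tk]; push_cast; linarith
    · simp only [tk]; push_cast; linarith
  set u : ℕ → ℂ := fun k => (s₀ : ℂ) + ((tk k : ℝ) : ℂ) * I with hu
  have hu_zero : ∀ k, Gc c (u k) = 0 := fun k => hcon (tk k) (htk_mem k)
  have hu_ne : ∀ k, u k ≠ z₀ := by
    intro k h
    have him := congrArg Complex.im h
    simp only [u, z₀, Complex.add_im, Complex.ofReal_im, Complex.mul_im,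
      Complex.ofReal_re, Complex.I_im, Complex.I_re, mul_zero, mul_one, zero_add] at him
    have : 0 < γ/(4*((k:ℝ)+1)) := by positivity
    simp only [tk] at him; push_cast at him; linarith
  have hu_tend : Tendsto u atTop (𝓝[≠] z₀) := by
    rw [tendsto_nhdsWithin_iff]
    constructor
    · have h1 : Tendsto (fun k : ℕ => γ/(4*((k:ℝ)+1))) atTop (𝓝 0) := by
        have := tendsto_one_div_add_atTop_nhds_zero_nat (𝕜 := ℝ)
        have h2 := this.const_mul (γ/4)
        simp only [mul_zero] at h2
        convert h2 using 2 with k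
        field_simp
      have h2 : Tendsto tk atTop (𝓝 (γ/2)) := by
        have := h1.const_add (γ/2)
        simpa [tk] using this
      have h3 : Tendsto (fun k => ((tk k : ℝ) : ℂ)) atTop (𝓝 ((γ/2 : ℝ) : ℂ)) :=
        (Complex.continuous_ofReal.tendsto _).comp h2
      have h4 := (h3.mul_const I).const_add (s₀ : ℂ)
      exact h4
    · exact Filter.Eventually.of_forall fun k => hu_ne k
  have hzero : Set.EqOn (Gc c) 0 Set.univ :=
    hGA.eqOn_zero_of_preconnected_of_frequently_eq_zero isPreconnected_univ (Set.mem_univ z₀)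
      (hu_tend.frequently (Filter.Eventually.of_forall hu_zero).frequently)
  -- now all real points vanish
  have hreal : ∀ x : ℝ, ∑ n ∈ c.support, c n * Real.exp (x * (-(Lg n))) = 0 := by
    intro x
    have := hzero (Set.mem_univ ((x : ℝ) : ℂ))
    simp only [Gc, Pi.zero_apply] at this
    rw [← this]
    refine Finset.sum_congr rfl fun n _ => ?_
    congr 1
    rw [Complex.ofReal_exp]
    congr 1
    push_cast
    ring
  have hinj : Set.InjOn (fun n : ℕ => -(Lg n)) c.support := by
    intro a _ b _ hab
    simp only [neg_inj, Lg] at hab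
    have ha : ((a:ℝ)+1) = ((b:ℝ)+1) := by
      have := congrArg Real.exp hab
      rwa [Real.exp_log (by positivity), Real.exp_log (by positivity)] at this
    exact_mod_cast (by linarith : (a:ℝ) = b)
  have hall := expIndep c.support (fun n => -(Lg n)) hinj (fun n => c n) hreal
  apply hc
  ext n
  by_cases hn : n ∈ c.support
  · exact hall n hn
  · simpa using Finsupp.notMem_support_iff.mp hn

lemma Gc_cont (c : ℕ →₀ ℂ) : Continuous (Gc c) := by
  unfold Gc
  apply continuous_finset_sum
  intro n _
  exact continuous_const.mul (Continuous.cexp (continuous_neg.mul continuous_const))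

lemma Fc_cont (c : ℕ →₀ ℂ) : Continuous (fun p : ℝ × ℝ => Fc c p.1 p.2) := by
  apply (Gc_cont c).comp
  exact (Complex.continuous_ofReal.comp continuous_fst).add
    ((Complex.continuous_ofReal.comp continuous_snd).mul continuous_const)

lemma hK_cont (c : ℕ →₀ ℂ) : Continuous (fun p : ℝ × ℝ => hK c p.1 p.2) := by
  have h1 : Continuous (fun p : ℝ × ℝ => Fc c p.1 (-p.2)) := by
    apply (Gc_cont c).comp
    exact (Complex.continuous_ofReal.comp continuous_fst).add
      ((Complex.continuous_ofReal.comp continuous_snd.neg).mul continuous_const)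
  exact ((Complex.continuous_normSq.comp (Fc_cont c)).add
    (Complex.continuous_normSq.comp h1)).div_const 2

lemma hK_cont_t (c : ℕ →₀ ℂ) (s : ℝ) : Continuous (fun t : ℝ => hK c s t) := by
  have h1 : Continuous (fun t : ℝ => Fc c s t) := by
    apply (Gc_cont c).comp
    exact continuous_const.add (Complex.continuous_ofReal.mul continuous_const)
  have h2 : Continuous (fun t : ℝ => Fc c s (-t)) := by
    apply (Gc_cont c).comp
    exact continuous_const.add ((Complex.continuous_ofReal.comp continuous_neg).mul
      continuous_const)
  exact ((Complex.continuous_normSq.comp h1).add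
    (Complex.continuous_normSq.comp h2)).div_const 2

lemma hK_nonneg (c : ℕ →₀ ℂ) (s t : ℝ) : 0 ≤ hK c s t := by
  unfold hK
  have := Complex.normSq_nonneg (Fc c s t)
  have := Complex.normSq_nonneg (Fc c s (-t))
  linarith

/-- for `1/2 < α < β < 1` and `γ > 0`, the infinite matrix
`A_{α,β,γ} = (a_{α,β,γ}(m,n))_{m,n ≥ 1}` is symmetric, and for every finitely supported
complex sequence `c ≠ 0`, the Hermitian form `Σ_m Σ_n conj(c_m) a_{α,β,γ}(m,n) c_n`
is a strictly positive real number. -/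
theorem statement4 (α β γ : ℝ) (hα : 1 / 2 < α) (hαβ : α < β) (hβ : β < 1) (hγ : 0 < γ) :
    (∀ m n : ℕ, aMat α β γ (m + 1) (n + 1) = aMat α β γ (n + 1) (m + 1)) ∧
    (∀ c : ℕ →₀ ℂ, c ≠ 0 →
      (∑ m ∈ c.support, ∑ n ∈ c.support,
        (starRingEnd ℂ) (c m) * (aMat α β γ (m + 1) (n + 1) : ℂ) * c n).im = 0 ∧
      0 < (∑ m ∈ c.support, ∑ n ∈ c.support,
        (starRingEnd ℂ) (c m) * (aMat α β γ (m + 1) (n + 1) : ℂ) * c n).re) := by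
  constructor
  · -- symmetry
    intro m n
    rw [aMat_eq, aMat_eq]
    congr 1
    · rw [add_comm (Lg n) (Lg m)]
    · have h : ∀ t : ℝ, Real.cos (t * (Lg n - Lg m)) = Real.cos (t * (Lg m - Lg n)) := by
        intro t; rw [← Real.cos_neg]; ring_nf
      simp only [h]
  · intro c hc
    set S := c.support with hS
    have cont1 : ∀ m n : ℕ, Continuous (fun s : ℝ =>
        ((starRingEnd ℂ) (c m) * c n * ((∫ t in (0:ℝ)..γ, Real.cos (t * (Lg m - Lg n))) : ℝ)) *
        ((Real.exp (-(s * (Lg m + Lg n))) : ℝ) : ℂ)) := by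
      intro m n
      apply Continuous.mul continuous_const
      exact Complex.continuous_ofReal.comp (Real.continuous_exp.comp (by continuity))
    have eq1 : ∑ m ∈ S, ∑ n ∈ S, (starRingEnd ℂ) (c m) * (aMat α β γ (m + 1) (n + 1) : ℂ) * c n
        = ∑ m ∈ S, ∑ n ∈ S, ∫ s in α..β,
          ((starRingEnd ℂ) (c m) * c n * ((∫ t in (0:ℝ)..γ, Real.cos (t * (Lg m - Lg n))) : ℝ)) *
          ((Real.exp (-(s * (Lg m + Lg n))) : ℝ) : ℂ) := by
      refine Finset.sum_congr rfl fun m _ => Finset.sum_congr rfl fun n _ => ?_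
      rw [aMat_eq, intervalIntegral.integral_const_mul]
      have h2 : ∫ s in α..β, ((Real.exp (-(s * (Lg m + Lg n))) : ℝ) : ℂ)
          = ((∫ s in α..β, Real.exp (-(s * (Lg m + Lg n)))) : ℝ) :=
        intervalIntegral.integral_ofReal
      rw [h2]
      push_cast
      ring
    have eq2 : ∑ m ∈ S, ∑ n ∈ S, (∫ s in α..β,
          ((starRingEnd ℂ) (c m) * c n * ((∫ t in (0:ℝ)..γ, Real.cos (t * (Lg m - Lg n))) : ℝ)) *
          ((Real.exp (-(s * (Lg m + Lg n))) : ℝ) : ℂ))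
        = ∫ s in α..β, ∑ m ∈ S, ∑ n ∈ S,
          ((starRingEnd ℂ) (c m) * c n * ((∫ t in (0:ℝ)..γ, Real.cos (t * (Lg m - Lg n))) : ℝ)) *
          ((Real.exp (-(s * (Lg m + Lg n))) : ℝ) : ℂ) := by
      rw [intervalIntegral.integral_finset_sum]
      · refine Finset.sum_congr rfl fun m _ => ?_
        rw [intervalIntegral.integral_finset_sum]
        exact fun n _ => (cont1 m n).intervalIntegrable _ _
      · intro m _
        exact (continuous_finset_sum S fun n _ => cont1 m n).intervalIntegrable _ _
    have eq3 : ∀ s : ℝ, ∑ m ∈ S, ∑ n ∈ S,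
          ((starRingEnd ℂ) (c m) * c n * ((∫ t in (0:ℝ)..γ, Real.cos (t * (Lg m - Lg n))) : ℝ)) *
          ((Real.exp (-(s * (Lg m + Lg n))) : ℝ) : ℂ)
        = ((∫ t in (0:ℝ)..γ, hK c s t : ℝ) : ℂ) := by
      intro s
      have cont2 : ∀ m n : ℕ, Continuous (fun t : ℝ =>
          (starRingEnd ℂ) (c m) * c n *
          ((Real.exp (-(s * (Lg m + Lg n))) * Real.cos (t * (Lg m - Lg n)) : ℝ) : ℂ)) := by
        intro m n
        apply Continuous.mul continuous_const
        apply Complex.continuous_ofReal.comp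
        exact continuous_const.mul (Real.continuous_cos.comp (by continuity))
      have e1 : ∀ m n : ℕ,
          ((starRingEnd ℂ) (c m) * c n * ((∫ t in (0:ℝ)..γ, Real.cos (t * (Lg m - Lg n))) : ℝ)) *
          ((Real.exp (-(s * (Lg m + Lg n))) : ℝ) : ℂ)
          = ∫ t in (0:ℝ)..γ, (starRingEnd ℂ) (c m) * c n *
            ((Real.exp (-(s * (Lg m + Lg n))) * Real.cos (t * (Lg m - Lg n)) : ℝ) : ℂ) := by
        intro m n
        rw [intervalIntegral.integral_const_mul]
        have h1 : ∫ t in (0:ℝ)..γ, ((Real.exp (-(s * (Lg m + Lg n))) *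
            Real.cos (t * (Lg m - Lg n)) : ℝ) : ℂ)
            = ((∫ t in (0:ℝ)..γ, Real.exp (-(s * (Lg m + Lg n))) *
              Real.cos (t * (Lg m - Lg n))) : ℝ) := intervalIntegral.integral_ofReal
        rw [h1, intervalIntegral.integral_const_mul]
        push_cast
        ring
      simp only [e1]
      have e2 : ∑ m ∈ S, ∑ n ∈ S, (∫ t in (0:ℝ)..γ, (starRingEnd ℂ) (c m) * c n *
            ((Real.exp (-(s * (Lg m + Lg n))) * Real.cos (t * (Lg m - Lg n)) : ℝ) : ℂ))
          = ∫ t in (0:ℝ)..γ, ∑ m ∈ S, ∑ n ∈ S, (starRingEnd ℂ) (c m) * c n *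
            ((Real.exp (-(s * (Lg m + Lg n))) * Real.cos (t * (Lg m - Lg n)) : ℝ) : ℂ) := by
        rw [intervalIntegral.integral_finset_sum]
        · refine Finset.sum_congr rfl fun m _ => ?_
          rw [intervalIntegral.integral_finset_sum]
          exact fun n _ => (cont2 m n).intervalIntegrable _ _
        · intro m _
          exact (continuous_finset_sum S fun n _ => cont2 m n).intervalIntegrable _ _
      rw [e2]
      have e3 : ∫ t in (0:ℝ)..γ, ∑ m ∈ S, ∑ n ∈ S, (starRingEnd ℂ) (c m) * c n *
            ((Real.exp (-(s * (Lg m + Lg n))) * Real.cos (t * (Lg m - Lg n)) : ℝ) : ℂ)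
          = ∫ t in (0:ℝ)..γ, ((hK c s t : ℝ) : ℂ) := by
        apply intervalIntegral.integral_congr
        intro t _
        exact pointwise_id c s t
      rw [e3]
      exact intervalIntegral.integral_ofReal
    have key : ∑ m ∈ S, ∑ n ∈ S,
        (starRingEnd ℂ) (c m) * (aMat α β γ (m + 1) (n + 1) : ℂ) * c n
        = ((∫ s in α..β, ∫ t in (0:ℝ)..γ, hK c s t : ℝ) : ℂ) := by
      rw [eq1, eq2]
      have e4 : ∫ s in α..β, (∑ m ∈ S, ∑ n ∈ S,
            ((starRingEnd ℂ) (c m) * c n * ((∫ t in (0:ℝ)..γ, Real.cos (t * (Lg m - Lg n))) : ℝ)) *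
            ((Real.exp (-(s * (Lg m + Lg n))) : ℝ) : ℂ))
          = ∫ s in α..β, ((∫ t in (0:ℝ)..γ, hK c s t : ℝ) : ℂ) := by
        apply intervalIntegral.integral_congr
        intro s _
        exact eq3 s
      rw [e4]
      exact intervalIntegral.integral_ofReal
    rw [key]
    refine ⟨Complex.ofReal_im _, ?_⟩
    rw [Complex.ofReal_re]
    set H : ℝ → ℝ := fun s => ∫ t in (0:ℝ)..γ, hK c s t with hH
    have Hcont : Continuous H := by
      apply intervalIntegral.continuous_parametric_intervalIntegral_of_continuous'
      exact hK_cont c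
    have Hnonneg : ∀ s, 0 ≤ H s :=
      fun s => intervalIntegral.integral_nonneg hγ.le fun t _ => hK_nonneg c s t
    obtain ⟨t₀, ht₀, hFne⟩ := exists_nonzero c hc ((α+β)/2) γ hγ
    have hKpos : 0 < hK c ((α+β)/2) t₀ := by
      unfold hK
      have h1 := Complex.normSq_pos.mpr hFne
      have h2 := Complex.normSq_nonneg (Fc c ((α+β)/2) (-t₀))
      linarith
    have hHpos : 0 < H ((α+β)/2) := by
      exact pos_integral (hK_cont_t c ((α+β)/2)) (fun t => hK_nonneg c _ t) ht₀ hKpos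
    have hmem : (α+β)/2 ∈ Set.Ioo α β := by constructor <;> linarith
    exact pos_integral Hcont Hnonneg hmem hHpos
end

section
/- Let (x(k))_{k≥1} be a complex sequence such that the Dirichlet series Σ_{k≥1} x(k) k^{−s} converges (pointwise) for every s ∈ ℂ with Re(s) > 0, and let f_x(s) denote its sum. Then for every compact subset K of the half-plane {s ∈ ℂ : Re(s) > 0}, the partial sums s ↦ Σ_{k=1}^{N} x(k) k^{−s} converge to f_x uniformly on K as N → ∞. -/
open MeasureTheory Complex Filter

/-- Bound on the difference of complex powers via the integral of the derivative. -/
lemma cpow_diff_norm_le {w : ℂ} (hw : 0 < w.re) {a b : ℝ} (ha : 0 < a) (hab : a ≤ b) :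
    ‖(b : ℂ) ^ (-w) - (a : ℂ) ^ (-w)‖ ≤ ‖w‖ / w.re * (a ^ (-w.re) - b ^ (-w.re)) := by
  have hb : 0 < b := ha.trans_le hab
  have h0 : (0 : ℝ) ∉ Set.uIcc a b := by
    rw [Set.uIcc_of_le hab]
    rintro ⟨h1, -⟩
    exact absurd h1 (not_le.mpr ha)
  have hwne : w ≠ 0 := fun h => by simp [h] at hw
  have hr : (-w - 1 : ℂ) ≠ -1 := by
    intro h
    apply hwne
    have : -w = 0 := by linear_combination h
    linear_combination -this
  have hint := integral_cpow (a := a) (b := b) (r := -w - 1) (Or.inr ⟨hr, h0⟩)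
  have hexp : (-w - 1 + 1 : ℂ) = -w := by ring
  rw [hexp] at hint
  have key : (b : ℂ) ^ (-w) - (a : ℂ) ^ (-w) = (-w) * ∫ t in a..b, (t : ℂ) ^ (-w - 1) := by
    rw [hint]
    have : (-w : ℂ) ≠ 0 := neg_ne_zero.mpr hwne
    field_simp
  rw [key, norm_mul, norm_neg]
  have hnorm : ∀ t ∈ Set.uIcc a b, ‖(t : ℂ) ^ (-w - 1)‖ = t ^ (-w.re - 1) := by
    intro t ht
    rw [Set.uIcc_of_le hab] at ht
    have ht0 : 0 < t := lt_of_lt_of_le ha ht.1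
    rw [Complex.norm_cpow_eq_rpow_re_of_pos ht0]
    norm_num
  have hle : ‖∫ t in a..b, (t : ℂ) ^ (-w - 1)‖ ≤ ∫ t in a..b, t ^ (-w.re - 1) := by
    calc ‖∫ t in a..b, (t : ℂ) ^ (-w - 1)‖ ≤ ∫ t in a..b, ‖(t : ℂ) ^ (-w - 1)‖ :=
          intervalIntegral.norm_integral_le_integral_norm hab
      _ = ∫ t in a..b, t ^ (-w.re - 1) := by
          apply intervalIntegral.integral_congr
          intro t ht
          exact hnorm t ht
  have hrre : (-w.re - 1 : ℝ) ≠ -1 := by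
    intro h
    have : w.re = 0 := by linarith
    exact hw.ne' this
  have hint2 := integral_rpow (a := a) (b := b) (r := -w.re - 1) (Or.inr ⟨hrre, h0⟩)
  have hexp2 : (-w.re - 1 + 1 : ℝ) = -w.re := by ring
  rw [hexp2] at hint2
  have heq : (∫ t in a..b, t ^ (-w.re - 1)) = (a ^ (-w.re) - b ^ (-w.re)) / w.re := by
    rw [hint2, div_neg, ← neg_div, neg_sub]
  calc ‖w‖ * ‖∫ t in a..b, (t : ℂ) ^ (-w - 1)‖
      ≤ ‖w‖ * ((a ^ (-w.re) - b ^ (-w.re)) / w.re) := by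
        apply mul_le_mul_of_nonneg_left _ (norm_nonneg w)
        rw [← heq]; exact hle
    _ = ‖w‖ / w.re * (a ^ (-w.re) - b ^ (-w.re)) := by ring

/-- if the Dirichlet series `Σ_{k≥1} x(k) k^{-s}` converges pointwise to `f s`
at every point `s` of the open half-plane `Re s > 0`, then its partial sums converge to `f`
uniformly on every compact subset of that half-plane. -/
theorem statement6 (x : ℕ → ℂ) (f : ℂ → ℂ)
    (hf : ∀ s : ℂ, 0 < s.re →
      Tendsto (fun N : ℕ => ∑ k ∈ Finset.range N, x (k + 1) * ((k + 1 : ℕ) : ℂ) ^ (-s))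
        atTop (nhds (f s)))
    (K : Set ℂ) (hK : IsCompact K) (hKsub : K ⊆ {s : ℂ | 0 < s.re}) :
    TendstoUniformlyOn
      (fun (N : ℕ) (s : ℂ) => ∑ k ∈ Finset.range N, x (k + 1) * ((k + 1 : ℕ) : ℂ) ^ (-s))
      f atTop K := by
  rcases K.eq_empty_or_nonempty with hKe | hKne
  · subst hKe; simp [tendstoUniformlyOn_empty]
  -- minimum of the real part on K
  obtain ⟨s₀, hs₀K, hs₀min⟩ := hK.exists_isMinOn hKne (Complex.continuous_re.continuousOn)
  set σ : ℝ := s₀.re with hσdef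
  have hσpos : 0 < σ := hKsub hs₀K
  have hσle : ∀ s ∈ K, σ ≤ s.re := fun s hs => hs₀min hs
  -- bound on K
  obtain ⟨R, hR⟩ := hK.isBounded.exists_norm_le
  -- the base point
  set w₀ : ℂ := ((σ / 2 : ℝ) : ℂ) with hw₀def
  have hw₀re : w₀.re = σ / 2 := by simp [hw₀def]
  have hw₀pos : 0 < w₀.re := by rw [hw₀re]; linarith
  -- partial sums at w₀
  set a : ℕ → ℂ := fun k => x (k + 1) * ((k + 1 : ℕ) : ℂ) ^ (-w₀) with ha_def
  set S : ℕ → ℂ := fun N => ∑ k ∈ Finset.range N, a k with hS_def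
  have hS_tendsto : Tendsto S atTop (nhds (f w₀)) := hf w₀ hw₀pos
  have hS_cauchy : CauchySeq S := hS_tendsto.cauchySeq
  -- uniform constants
  set R' : ℝ := R + σ / 2 + 1 with hR'def
  have hR'pos : 0 < R' := by
    have := (norm_nonneg s₀).trans (hR s₀ hs₀K)
    rw [hR'def]; linarith
  set C : ℝ := 1 + R' / (σ / 2) with hCdef
  have hCpos : 0 < C := by
    have : 0 < R' / (σ / 2) := div_pos hR'pos (by linarith)
    rw [hCdef]; linarith
  -- splitting of the terms
  have hsplit : ∀ s ∈ K, ∀ k : ℕ,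
      x (k + 1) * ((k + 1 : ℕ) : ℂ) ^ (-s) = a k * ((k + 1 : ℕ) : ℂ) ^ (-(s - w₀)) := by
    intro s hs k
    have hne : ((k + 1 : ℕ) : ℂ) ≠ 0 := Nat.cast_ne_zero.mpr (Nat.succ_ne_zero k)
    have : (-s : ℂ) = -w₀ + -(s - w₀) := by ring
    rw [this, Complex.cpow_add _ _ hne, ha_def]
    ring
  -- properties of w := s - w₀ for s ∈ K
  have hw_re : ∀ s ∈ K, σ / 2 ≤ (s - w₀).re := by
    intro s hs
    have := hσle s hs
    simp only [Complex.sub_re, hw₀re]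
    linarith
  have hw_repos : ∀ s ∈ K, 0 < (s - w₀).re := fun s hs => lt_of_lt_of_le (by linarith) (hw_re s hs)
  have hw_norm : ∀ s ∈ K, ‖s - w₀‖ ≤ R' := by
    intro s hs
    calc ‖s - w₀‖ ≤ ‖s‖ + ‖w₀‖ := norm_sub_le _ _
      _ ≤ R + σ / 2 := by
          have h1 := hR s hs
          have h2 : ‖w₀‖ = σ / 2 := by
            rw [hw₀def, Complex.norm_real, Real.norm_eq_abs, abs_of_pos (by linarith)]
          linarith
      _ ≤ R' := by rw [hR'def]; linarith
  -- norm of g k := (k+1)^(-w) is ≤ 1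
  have hg_norm : ∀ s ∈ K, ∀ k : ℕ, ‖((k + 1 : ℕ) : ℂ) ^ (-(s - w₀))‖ ≤ 1 := by
    intro s hs k
    have hk : (0 : ℝ) < (k + 1 : ℕ) := by positivity
    rw [show ((k + 1 : ℕ) : ℂ) = ((k + 1 : ℕ) : ℝ) by simp,
      Complex.norm_cpow_eq_rpow_re_of_pos hk]
    apply Real.rpow_le_one_of_one_le_of_nonpos
    · exact_mod_cast Nat.one_le_iff_ne_zero.mpr (Nat.succ_ne_zero k)
    · simp only [Complex.neg_re]
      linarith [hw_repos s hs]
  -- the key Abel estimate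
  have key : ∀ δ : ℝ, 0 < δ → ∀ M : ℕ, (∀ m ≥ M, ‖S m - S M‖ ≤ δ) →
      ∀ s ∈ K, ∀ n ≥ M,
        ‖(∑ k ∈ Finset.range n, x (k + 1) * ((k + 1 : ℕ) : ℂ) ^ (-s)) -
          ∑ k ∈ Finset.range M, x (k + 1) * ((k + 1 : ℕ) : ℂ) ^ (-s)‖ ≤ δ * C := by
    intro δ hδ M hM s hs n hn
    set w : ℂ := s - w₀ with hw_def
    set g : ℕ → ℂ := fun k => ((k + 1 : ℕ) : ℂ) ^ (-w) with hg_def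
    set E : ℕ → ℂ := fun m => S m - S M with hE_def
    rcases eq_or_lt_of_le hn with hnM | hnM
    · subst hnM; simp [hδ.le, hCpos.le, mul_nonneg hδ.le hCpos.le]
    -- rewrite the difference as a sum over Ico
    have hdiff : (∑ k ∈ Finset.range n, x (k + 1) * ((k + 1 : ℕ) : ℂ) ^ (-s)) -
        ∑ k ∈ Finset.range M, x (k + 1) * ((k + 1 : ℕ) : ℂ) ^ (-s) =
        ∑ k ∈ Finset.Ico M n, g k * a k := by
      rw [Finset.sum_Ico_eq_sub _ hnM.le]
      congr 1 <;> (apply Finset.sum_congr rfl; intro k _; rw [hsplit s hs k]; ring)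
    rw [hdiff]
    -- Abel summation
    have habel := Finset.sum_Ico_by_parts g a hnM
    simp only [smul_eq_mul] at habel
    -- telescoping of the differences of g
    have htel : ∑ i ∈ Finset.Ico M (n - 1), (g (i + 1) - g i) = g (n - 1) - g M := by
      have hMn1 : M ≤ n - 1 := Nat.le_sub_one_of_lt hnM
      rw [Finset.sum_Ico_eq_sub _ hMn1, Finset.sum_range_sub, Finset.sum_range_sub]
      ring
    -- identity in terms of E
    have hiden : ∑ k ∈ Finset.Ico M n, g k * a k =
        g (n - 1) * E n - ∑ i ∈ Finset.Ico M (n - 1), (g (i + 1) - g i) * E (i + 1) := by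
      rw [habel]
      have h1 : ∑ i ∈ Finset.Ico M (n - 1), (g (i + 1) - g i) * E (i + 1) =
          (∑ i ∈ Finset.Ico M (n - 1), (g (i + 1) - g i) * S (i + 1)) -
          (g (n - 1) - g M) * S M := by
        rw [← htel, Finset.sum_mul, ← Finset.sum_sub_distrib]
        apply Finset.sum_congr rfl
        intro i _
        simp only [hE_def]
        ring
      rw [h1]
      have : (fun k => ∑ i ∈ Finset.range k, a i) = S := rfl
      simp only [hE_def]
      ring
    rw [hiden]
    -- estimates
    have hE_bound : ∀ m ≥ M, ‖E m‖ ≤ δ := hM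
    have hErange : ∀ i ∈ Finset.Ico M (n - 1), ‖E (i + 1)‖ ≤ δ := by
      intro i hi
      rw [Finset.mem_Ico] at hi
      exact hE_bound (i + 1) (by omega)
    -- bound on the sum of differences of g
    have hgdiff : ∀ i : ℕ, ‖g (i + 1) - g i‖ ≤
        R' / (σ / 2) * (((i + 1 : ℕ) : ℝ) ^ (-w.re) - ((i + 2 : ℕ) : ℝ) ^ (-w.re)) := by
      intro i
      have h1 : (0 : ℝ) < ((i + 1 : ℕ) : ℝ) := by positivity
      have h2 : ((i + 1 : ℕ) : ℝ) ≤ ((i + 2 : ℕ) : ℝ) := by exact_mod_cast Nat.le_succ (i + 1)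
      have hbnd := cpow_diff_norm_le (hw_repos s hs) h1 h2
      have hcast1 : ((i + 1 + 1 : ℕ) : ℂ) = ((((i + 2 : ℕ) : ℝ)) : ℂ) := by push_cast; ring
      have hcast2 : ((i + 1 : ℕ) : ℂ) = ((((i + 1 : ℕ) : ℝ)) : ℂ) := by push_cast; ring
      have hgd : g (i + 1) - g i = (((i + 2 : ℕ) : ℝ) : ℂ) ^ (-w) - (((i + 1 : ℕ) : ℝ) : ℂ) ^ (-w) := by
        simp only [hg_def]
        rw [hcast1, hcast2]
      rw [hgd]
      refine hbnd.trans (mul_le_mul_of_nonneg_right ?_ ?_)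
      · exact div_le_div₀ hR'pos.le (hw_norm s hs) (by linarith) (hw_re s hs)
      · have h3 : ((i + 2 : ℕ) : ℝ) ^ (-w.re) ≤ ((i + 1 : ℕ) : ℝ) ^ (-w.re) := by
          rw [Real.rpow_neg (by positivity), Real.rpow_neg (by positivity)]
          apply inv_anti₀ (Real.rpow_pos_of_pos h1 _)
          exact Real.rpow_le_rpow (le_of_lt h1) h2 (le_of_lt (hw_repos s hs))
        linarith
    -- telescoping bound on the total variation of g
    have htot : ∑ i ∈ Finset.Ico M (n - 1), ‖g (i + 1) - g i‖ ≤ R' / (σ / 2) := by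
      calc ∑ i ∈ Finset.Ico M (n - 1), ‖g (i + 1) - g i‖
          ≤ ∑ i ∈ Finset.Ico M (n - 1),
              R' / (σ / 2) * (((i + 1 : ℕ) : ℝ) ^ (-w.re) - ((i + 2 : ℕ) : ℝ) ^ (-w.re)) :=
            Finset.sum_le_sum fun i _ => hgdiff i
        _ = R' / (σ / 2) * ∑ i ∈ Finset.Ico M (n - 1),
              (((i + 1 : ℕ) : ℝ) ^ (-w.re) - ((i + 2 : ℕ) : ℝ) ^ (-w.re)) := by
            rw [Finset.mul_sum]
        _ ≤ R' / (σ / 2) * 1 := by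
            apply mul_le_mul_of_nonneg_left _ (by positivity)
            have hMn1 : M ≤ n - 1 := Nat.le_sub_one_of_lt hnM
            have hteleq : ∑ i ∈ Finset.Ico M (n - 1),
                (((i + 1 : ℕ) : ℝ) ^ (-w.re) - ((i + 2 : ℕ) : ℝ) ^ (-w.re)) =
                ((M + 1 : ℕ) : ℝ) ^ (-w.re) - ((n - 1 + 1 : ℕ) : ℝ) ^ (-w.re) := by
              rw [Finset.sum_Ico_eq_sub _ hMn1, Finset.sum_range_sub' (fun i =>
                ((i + 1 : ℕ) : ℝ) ^ (-w.re)), Finset.sum_range_sub' (fun i =>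
                ((i + 1 : ℕ) : ℝ) ^ (-w.re))]
              ring
            rw [hteleq]
            have h1 : ((M + 1 : ℕ) : ℝ) ^ (-w.re) ≤ 1 :=
              Real.rpow_le_one_of_one_le_of_nonpos
                (by exact_mod_cast Nat.one_le_iff_ne_zero.mpr (Nat.succ_ne_zero M))
                (by linarith [hw_repos s hs])
            have h2 : (0 : ℝ) ≤ ((n - 1 + 1 : ℕ) : ℝ) ^ (-w.re) :=
              Real.rpow_nonneg (by positivity) _
            linarith
        _ = R' / (σ / 2) := mul_one _
    -- final estimate
    calc ‖g (n - 1) * E n - ∑ i ∈ Finset.Ico M (n - 1), (g (i + 1) - g i) * E (i + 1)‖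
        ≤ ‖g (n - 1) * E n‖ + ‖∑ i ∈ Finset.Ico M (n - 1), (g (i + 1) - g i) * E (i + 1)‖ :=
          norm_sub_le _ _
      _ ≤ 1 * δ + R' / (σ / 2) * δ := by
          apply add_le_add
          · rw [norm_mul]
            exact mul_le_mul (hg_norm s hs (n - 1)) (hE_bound n (by omega)) (norm_nonneg _)
              zero_le_one
          · calc ‖∑ i ∈ Finset.Ico M (n - 1), (g (i + 1) - g i) * E (i + 1)‖
                ≤ ∑ i ∈ Finset.Ico M (n - 1), ‖(g (i + 1) - g i) * E (i + 1)‖ :=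
                  norm_sum_le _ _
              _ ≤ ∑ i ∈ Finset.Ico M (n - 1), ‖g (i + 1) - g i‖ * δ := by
                  apply Finset.sum_le_sum
                  intro i hi
                  rw [norm_mul]
                  exact mul_le_mul_of_nonneg_left (hErange i hi) (norm_nonneg _)
              _ = (∑ i ∈ Finset.Ico M (n - 1), ‖g (i + 1) - g i‖) * δ := by
                  rw [Finset.sum_mul]
              _ ≤ R' / (σ / 2) * δ := mul_le_mul_of_nonneg_right htot hδ.le
      _ = δ * C := by rw [hCdef]; ring
  -- conclude uniform convergence via the Cauchy criterion
  rw [Metric.tendstoUniformlyOn_iff]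
  intro ε hε
  set δ : ℝ := ε / (2 * C) with hδdef
  have hδpos : 0 < δ := by positivity
  obtain ⟨M₀, hM₀⟩ := Metric.cauchySeq_iff'.mp hS_cauchy (δ / 2) (by positivity)
  filter_upwards [eventually_ge_atTop M₀] with N hN
  intro s hs
  have hSbound : ∀ m ≥ N, ‖S m - S N‖ ≤ δ := by
    intro m hm
    have h1 := hM₀ m (le_trans hN hm)
    have h2 := hM₀ N hN
    rw [dist_eq_norm] at h1 h2
    calc ‖S m - S N‖ = ‖(S m - S M₀) - (S N - S M₀)‖ := by rw [sub_sub_sub_cancel_right]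
      _ ≤ ‖S m - S M₀‖ + ‖S N - S M₀‖ := norm_sub_le _ _
      _ ≤ δ := by linarith
  have hkey := key δ hδpos N hSbound s hs
  have hlim : Tendsto (fun n : ℕ => ∑ k ∈ Finset.range n, x (k + 1) * ((k + 1 : ℕ) : ℂ) ^ (-s))
      atTop (nhds (f s)) := hf s (hKsub hs)
  have hlim' : Tendsto (fun n : ℕ =>
      ‖(∑ k ∈ Finset.range n, x (k + 1) * ((k + 1 : ℕ) : ℂ) ^ (-s)) -
        ∑ k ∈ Finset.range N, x (k + 1) * ((k + 1 : ℕ) : ℂ) ^ (-s)‖) atTop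
      (nhds ‖f s - ∑ k ∈ Finset.range N, x (k + 1) * ((k + 1 : ℕ) : ℂ) ^ (-s)‖) :=
    (hlim.sub tendsto_const_nhds).norm
  have hfinal : ‖f s - ∑ k ∈ Finset.range N, x (k + 1) * ((k + 1 : ℕ) : ℂ) ^ (-s)‖ ≤ δ * C := by
    apply le_of_tendsto hlim'
    filter_upwards [eventually_ge_atTop N] with n hn
    exact hkey n hn
  rw [dist_eq_norm]
  calc ‖f s - ∑ k ∈ Finset.range N, x (k + 1) * ((k + 1 : ℕ) : ℂ) ^ (-s)‖ ≤ δ * C := hfinal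
    _ = ε / 2 := by rw [hδdef]; field_simp
    _ < ε := by linarith
end
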